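/- For λ ∈ ℝ and (x,p) ∈ ℝ^{2N} let θ^λ = θ^λ(x,p) ∈ ℝ^N be the unique solution of p_i = θ^λ_i + λ Σ_{j≠i} ψ_x(x_i−x_j, θ^λ_i−θ^λ_j) for i = 1,…,N, and define the N×N matrix A^λ by A^λ_{ij} = δ_{ij}(1 + λ Σ_{k≠i} ψ_{xθ}(x_i−x_k, θ^λ_i−θ^λ_k)) − (1−δ_{ij}) λ ψ_{xθ}(x_i−x_j, θ^λ_i−θ^λ_j). Then for λ ≥ 0 the map λ ↦ θ^λ(x,p) is differentiable, A^λ is invertible, and ∂θ^λ_i/∂λ = − Σ_{j=1}^N Σ_{k≠j} (A^λ)^{−1}_{ij} ψ_x(x_j−x_k, θ^λ_j−θ^λ_k). -/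

import Mathlib

open Finset

private lemma pairSum {N : ℕ} (g : Fin N → Fin N → ℝ)
    (h : ∀ i k, i ≠ k → 0 ≤ g i k + g k i) :
    0 ≤ ∑ i, ∑ k ∈ Finset.univ.erase i, g i k := by
  have hswap : ∑ i, ∑ k ∈ Finset.univ.erase i, g i k
      = ∑ i, ∑ k ∈ Finset.univ.erase i, g k i :=
    Finset.sum_comm' (s := univ) (t := fun i => univ.erase i)
      (t' := univ) (s' := fun k => univ.erase k)
      (fun i k => by simp [ne_comm, eq_comm, and_comm])
  have h2 : 0 ≤ ∑ i, ∑ k ∈ Finset.univ.erase i, (g i k + g k i) :=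
    Finset.sum_nonneg fun i _ => Finset.sum_nonneg fun k hk =>
      h i k (by simpa [eq_comm] using (Finset.mem_erase.mp hk).1)
  have h3 : ∑ i, ∑ k ∈ Finset.univ.erase i, (g i k + g k i)
      = (∑ i, ∑ k ∈ Finset.univ.erase i, g i k)
        + ∑ i, ∑ k ∈ Finset.univ.erase i, g k i := by
    simp [Finset.sum_add_distrib]
  rw [← hswap] at h3
  linarith

private lemma uniqSol {N : ℕ} (ψx : ℝ → ℝ → ℝ)
    (hmono : ∀ c, Monotone (ψx c))
    (hanti : ∀ x t, ψx (-x) (-t) = - ψx x t)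
    (x p : Fin N → ℝ) (μ : ℝ) (hμ : 0 ≤ μ) (θ θ' : Fin N → ℝ)
    (h1 : ∀ i, p i = θ i + μ * ∑ j ∈ Finset.univ.erase i, ψx (x i - x j) (θ i - θ j))
    (h2 : ∀ i, p i = θ' i + μ * ∑ j ∈ Finset.univ.erase i, ψx (x i - x j) (θ' i - θ' j)) :
    θ = θ' := by
  set d : Fin N → ℝ := fun i => θ i - θ' i with hd
  have key : ∀ i, d i + μ * (∑ j ∈ Finset.univ.erase i,
      (ψx (x i - x j) (θ i - θ j) - ψx (x i - x j) (θ' i - θ' j))) = 0 := by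
    intro i
    have e1 := h1 i; have e2 := h2 i
    have : d i + μ * ((∑ j ∈ Finset.univ.erase i, ψx (x i - x j) (θ i - θ j))
        - ∑ j ∈ Finset.univ.erase i, ψx (x i - x j) (θ' i - θ' j)) = 0 := by
      simp only [hd]; ring_nf; linarith [e1, e2]
    simpa [Finset.sum_sub_distrib] using this
  have hSnonneg : 0 ≤ ∑ i, ∑ j ∈ Finset.univ.erase i,
      d i * (ψx (x i - x j) (θ i - θ j) - ψx (x i - x j) (θ' i - θ' j)) := by
    apply pairSum
    intro i k hik
    have hrw : ψx (x k - x i) (θ k - θ i) = - ψx (x i - x k) (θ i - θ k) := by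
      rw [show x k - x i = -(x i - x k) by ring, show θ k - θ i = -(θ i - θ k) by ring, hanti]
    have hrw' : ψx (x k - x i) (θ' k - θ' i) = - ψx (x i - x k) (θ' i - θ' k) := by
      rw [show x k - x i = -(x i - x k) by ring, show θ' k - θ' i = -(θ' i - θ' k) by ring, hanti]
    rw [hrw, hrw']
    have hkey : 0 ≤ ((θ i - θ k) - (θ' i - θ' k)) *
        (ψx (x i - x k) (θ i - θ k) - ψx (x i - x k) (θ' i - θ' k)) := by
      rcases le_total (θ i - θ k) (θ' i - θ' k) with h | h
      · nlinarith [hmono (x i - x k) h]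
      · exact mul_nonneg (by linarith) (by linarith [hmono (x i - x k) h])
    have hdd : d i - d k = (θ i - θ k) - (θ' i - θ' k) := by simp [hd]; ring
    rw [← hdd] at hkey
    nlinarith [hkey]
  have hzero : ∑ i, d i * (d i + μ * (∑ j ∈ Finset.univ.erase i,
      (ψx (x i - x j) (θ i - θ j) - ψx (x i - x j) (θ' i - θ' j)))) = 0 := by
    apply Finset.sum_eq_zero; intro i _; rw [key i]; ring
  have hexpand : ∑ i, d i * (d i + μ * (∑ j ∈ Finset.univ.erase i,
      (ψx (x i - x j) (θ i - θ j) - ψx (x i - x j) (θ' i - θ' j))))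
      = (∑ i, d i ^ 2) + μ * ∑ i, ∑ j ∈ Finset.univ.erase i,
        d i * (ψx (x i - x j) (θ i - θ j) - ψx (x i - x j) (θ' i - θ' j)) := by
    rw [Finset.mul_sum, ← Finset.sum_add_distrib]
    apply Finset.sum_congr rfl; intro i _
    rw [← Finset.mul_sum]
    ring
  have hsq : ∑ i, d i ^ 2 ≤ 0 := by
    rw [hexpand] at hzero
    nlinarith [mul_nonneg hμ hSnonneg]
  have hz : ∀ i ∈ (univ : Finset (Fin N)), d i ^ 2 = 0 :=
    (Finset.sum_eq_zero_iff_of_nonneg (fun i _ => sq_nonneg (d i))).mp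
      (le_antisymm hsq (Finset.sum_nonneg fun i _ => sq_nonneg (d i)))
  funext i
  have := hz i (mem_univ i)
  have : d i = 0 := by nlinarith [this]
  simpa [hd, sub_eq_zero] using this

private lemma matStuff {N : ℕ} (lam : ℝ) (hlam : 0 ≤ lam) (b : Fin N → Fin N → ℝ)
    (hb : ∀ i j, 0 ≤ b i j) (hbs : ∀ i j, b i j = b j i)
    (A : Matrix (Fin N) (Fin N) ℝ)
    (hA : ∀ i j, A i j = if i = j then 1 + lam * ∑ k ∈ Finset.univ.erase i, b i k
      else -(lam * b i j)) :
    (∀ v i, A.mulVec v i = v i + lam * ∑ k ∈ Finset.univ.erase i, b i k * (v i - v k)) ∧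
      IsUnit A.det := by
  have hmv : ∀ v i, A.mulVec v i = v i + lam * ∑ k ∈ Finset.univ.erase i, b i k * (v i - v k) := by
    intro v i
    have : A.mulVec v i = ∑ j, A i j * v j := by
      simp [Matrix.mulVec, dotProduct]
    rw [this, ← Finset.add_sum_erase _ _ (mem_univ i), hA i i, if_pos rfl]
    have h1 : ∑ j ∈ Finset.univ.erase i, A i j * v j
        = ∑ j ∈ Finset.univ.erase i, -(lam * b i j) * v j := by
      apply Finset.sum_congr rfl; intro j hj
      rw [hA i j, if_neg (by simpa [eq_comm] using (Finset.mem_erase.mp hj).1)]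
    rw [h1, add_mul, one_mul, mul_comm lam, Finset.sum_mul, Finset.sum_mul, Finset.mul_sum,
      add_assoc, ← Finset.sum_add_distrib]
    congr 1
    apply Finset.sum_congr rfl; intro j _; ring
  refine ⟨hmv, ?_⟩
  rw [← Matrix.isUnit_iff_isUnit_det]
  rw [← Matrix.mulVec_injective_iff_isUnit]
  intro v w hvw
  have hd : A.mulVec (v - w) = 0 := by
    rw [Matrix.mulVec_sub, hvw, sub_self]
  set d : Fin N → ℝ := v - w with hdd
  have hzero : ∑ i, d i * A.mulVec d i = 0 := by
    rw [hd]; simp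
  have hS : 0 ≤ ∑ i, ∑ k ∈ Finset.univ.erase i, b i k * (d i * (d i - d k)) := by
    apply pairSum
    intro i k hik
    rw [hbs k i]
    nlinarith [hb i k, sq_nonneg (d i - d k)]
  have hexp : ∑ i, d i * A.mulVec d i = (∑ i, d i ^ 2)
      + lam * ∑ i, ∑ k ∈ Finset.univ.erase i, b i k * (d i * (d i - d k)) := by
    rw [Finset.mul_sum, ← Finset.sum_add_distrib]
    apply Finset.sum_congr rfl; intro i _
    rw [hmv d i, Finset.mul_sum, mul_add, Finset.mul_sum, Finset.mul_sum]
    congr 1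
    · ring
    apply Finset.sum_congr rfl; intro j _; ring
  have hsq : ∑ i, d i ^ 2 ≤ 0 := by
    rw [hexp] at hzero
    nlinarith [mul_nonneg hlam hS]
  have hz : ∀ i ∈ (univ : Finset (Fin N)), d i ^ 2 = 0 :=
    (Finset.sum_eq_zero_iff_of_nonneg (fun i _ => sq_nonneg (d i))).mp
      (le_antisymm hsq (Finset.sum_nonneg fun i _ => sq_nonneg (d i)))
  funext i
  have := hz i (mem_univ i)
  have hdi : d i = 0 := by nlinarith [this]
  have : v i - w i = 0 := hdi
  linarith

/-- Differentiability of the asymptotic momenta along the TT̄-flow `λ ↦ λψ`: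
for `λ ≥ 0`, the matrix `A^λ` is invertible and
`∂θᵢ^λ/∂λ = −∑ⱼ∑_{k≠j} (A^λ)⁻¹ᵢⱼ ψ_x(xⱼ−x_k, θⱼ^λ−θ_k^λ)`. -/
theorem stmt15 (N : ℕ) (ε : ℝ) (hε : 0 < ε)
    (ψ ψx ψθ ψxθ : ℝ → ℝ → ℝ)
    (hC2 : ContDiff ℝ 2 (fun q : ℝ × ℝ => ψ q.1 q.2))
    (hψx : ∀ x t, HasDerivAt (fun x' => ψ x' t) (ψx x t) x)
    (hψθ : ∀ x t, HasDerivAt (fun t' => ψ x t') (ψθ x t) t)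
    (hψxθ : ∀ x t, HasDerivAt (fun t' => ψx x t') (ψxθ x t) t)
    (hpos : ∀ x t, 0 ≤ ψxθ x t)
    (hsym : ∀ x t, ψ (-x) (-t) = ψ x t)
    (hrange : ∀ x t, ε ≤ |x| → ψx x t = 0)
    (θlam : ℝ → (Fin N → ℝ) × (Fin N → ℝ) → Fin N → ℝ)
    (hθlam : ∀ lam : ℝ, 0 ≤ lam → ∀ (q : (Fin N → ℝ) × (Fin N → ℝ)) (i : Fin N),
      q.2 i = θlam lam q i + lam * ∑ j ∈ Finset.univ.erase i,
        ψx (q.1 i - q.1 j) (θlam lam q i - θlam lam q j))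
    (A : ℝ → (Fin N → ℝ) × (Fin N → ℝ) → Matrix (Fin N) (Fin N) ℝ)
    (hA : ∀ (lam : ℝ) (q : (Fin N → ℝ) × (Fin N → ℝ)) (i j : Fin N),
      A lam q i j =
        if i = j then
          1 + lam * ∑ k ∈ Finset.univ.erase i,
            ψxθ (q.1 i - q.1 k) (θlam lam q i - θlam lam q k)
        else -(lam * ψxθ (q.1 i - q.1 j) (θlam lam q i - θlam lam q j))) :
    ∀ lam : ℝ, 0 ≤ lam → ∀ q : (Fin N → ℝ) × (Fin N → ℝ),
      IsUnit (A lam q).det ∧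
      ∀ i : Fin N,
        HasDerivWithinAt (fun μ => θlam μ q i)
          (-∑ j : Fin N, ∑ k ∈ Finset.univ.erase j,
            (A lam q)⁻¹ i j * ψx (q.1 j - q.1 k) (θlam lam q j - θlam lam q k))
          (Set.Ici 0) lam := by
  -- basic consequences of the hypotheses on ψ
  have hanti : ∀ x t, ψx (-x) (-t) = - ψx x t := by
    intro x t
    have h1 : HasDerivAt (fun x' => ψ (-x') (-t)) (ψx (-x) (-t) * (-1)) x :=
      (hψx (-x) (-t)).comp x (hasDerivAt_neg x)
    have h2 : HasDerivAt (fun x' => ψ x' t) (ψx (-x) (-t) * (-1)) x := by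
      simpa only [hsym] using h1
    have := h2.unique (hψx x t)
    linarith
  have heven : ∀ x t, ψxθ (-x) (-t) = ψxθ x t := by
    intro x t
    have h1 : HasDerivAt (fun t' => ψx (-x) (-t')) (ψxθ (-x) (-t) * (-1)) t :=
      (hψxθ (-x) (-t)).comp t (hasDerivAt_neg t)
    have h2 : HasDerivAt (fun t' => - ψx x t') (ψxθ (-x) (-t) * (-1)) t := by
      simpa only [hanti] using h1
    have h3 : HasDerivAt (fun t' => - ψx x t') (- ψxθ x t) t := (hψxθ x t).neg
    have := h2.unique h3
    linarith
  have hmono : ∀ c, Monotone (fun t => ψx c t) := by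
    intro c
    apply monotone_of_deriv_nonneg
    · exact fun t => (hψxθ c t).differentiableAt
    · intro t
      rw [(hψxθ c t).deriv]; exact hpos c t
  -- two-variable regularity of ψx
  have hψxC1 : ContDiff ℝ 1 (fun v : ℝ × ℝ => ψx v.1 v.2) := by
    set ψF : ℝ × ℝ → ℝ := fun v => ψ v.1 v.2 with hψF
    have hfd : ContDiff ℝ 1 (fderiv ℝ ψF) := hC2.fderiv_right (by norm_num)
    have heq : ∀ v : ℝ × ℝ, ψx v.1 v.2 = fderiv ℝ ψF v ((1 : ℝ), (0 : ℝ)) := by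
      intro v
      have hd : HasFDerivAt ψF (fderiv ℝ ψF v) v :=
        (hC2.differentiable (by norm_num)).differentiableAt.hasFDerivAt
      have hline : HasFDerivAt (fun x' : ℝ => ((x' : ℝ), v.2))
          ((ContinuousLinearMap.id ℝ ℝ).prod 0) v.1 :=
        (hasFDerivAt_id v.1).prodMk (hasFDerivAt_const v.2 v.1)
      have hcomp := hd.comp v.1 (by simpa using hline)
      have : HasDerivAt (fun x' => ψ x' v.2)
          (((fderiv ℝ ψF v).comp ((ContinuousLinearMap.id ℝ ℝ).prod 0)) 1) v.1 :=
        hcomp.hasDerivAt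
      have := (hψx v.1 v.2).unique this
      simpa using this
    have hC : ContDiff ℝ 1 (fun v : ℝ × ℝ => fderiv ℝ ψF v ((1 : ℝ), (0 : ℝ))) :=
      hfd.clm_apply contDiff_const
    have hfun : (fun v : ℝ × ℝ => ψx v.1 v.2)
        = fun v : ℝ × ℝ => fderiv ℝ ψF v ((1:ℝ),(0:ℝ)) := funext heq
    rw [hfun]; exact hC
  intro lam hlam q
  set x : Fin N → ℝ := q.1 with hxq
  set p : Fin N → ℝ := q.2 with hpq
  set Θ : Fin N → ℝ := θlam lam q with hΘq
  -- the matrix A lam q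
  obtain ⟨hmv, hUnit⟩ := matStuff lam hlam
    (fun i k => ψxθ (x i - x k) (Θ i - Θ k)) (fun i j => hpos _ _)
    (fun i j => by
      have : ψxθ (x j - x i) (Θ j - Θ i) = ψxθ (-(x i - x j)) (-(Θ i - Θ j)) := by
        rw [show -(x i - x j) = x j - x i by ring, show -(Θ i - Θ j) = Θ j - Θ i by ring]
      simp only [this, heven])
    (A lam q) (fun i j => hA lam q i j)
  refine ⟨hUnit, ?_⟩
  -- the map H(μ, θ) = (μ, G(μ,θ)) and its derivative at (lam, Θ)
  set H : ℝ × (Fin N → ℝ) → ℝ × (Fin N → ℝ) := fun z =>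
    (z.1, fun i => z.2 i + z.1 * ∑ k ∈ Finset.univ.erase i,
      ψx (x i - x k) (z.2 i - z.2 k) - p i) with hHdef
  have hHC1 : ContDiff ℝ 1 H := by
    apply ContDiff.prodMk contDiff_fst
    apply contDiff_pi.mpr; intro i
    have h1 : ContDiff ℝ 1 fun z : ℝ × (Fin N → ℝ) =>
        ∑ k ∈ Finset.univ.erase i, ψx (x i - x k) (z.2 i - z.2 k) :=
      ContDiff.sum fun k _ => hψxC1.comp
        (contDiff_const.prodMk ((contDiff_pi.1 contDiff_snd i).sub (contDiff_pi.1 contDiff_snd k)))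
    exact ((contDiff_pi.1 contDiff_snd i).add (contDiff_fst.mul h1)).sub contDiff_const
  set fstL : (ℝ × (Fin N → ℝ)) →L[ℝ] ℝ := ContinuousLinearMap.fst ℝ ℝ (Fin N → ℝ) with hfstL
  set sndL : (ℝ × (Fin N → ℝ)) →L[ℝ] (Fin N → ℝ) :=
    ContinuousLinearMap.snd ℝ ℝ (Fin N → ℝ) with hsndL
  set ℓ : Fin N → Fin N → (ℝ × (Fin N → ℝ)) →L[ℝ] ℝ := fun i k =>
    (ContinuousLinearMap.proj i).comp sndL - (ContinuousLinearMap.proj k).comp sndL with hℓ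
  set DF : Fin N → (ℝ × (Fin N → ℝ)) →L[ℝ] ℝ := fun i =>
    ∑ k ∈ Finset.univ.erase i, ψxθ (x i - x k) (Θ i - Θ k) • ℓ i k with hDF
  set FΘ : Fin N → ℝ := fun i => ∑ k ∈ Finset.univ.erase i, ψx (x i - x k) (Θ i - Θ k) with hFΘ
  set Li : Fin N → (ℝ × (Fin N → ℝ)) →L[ℝ] ℝ := fun i =>
    (ContinuousLinearMap.proj i).comp sndL + (lam • DF i + FΘ i • fstL) with hLi
  set L₀ : (ℝ × (Fin N → ℝ)) →L[ℝ] (ℝ × (Fin N → ℝ)) :=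
    fstL.prod (ContinuousLinearMap.pi Li) with hL₀def
  have hL₀ : HasFDerivAt H L₀ (lam, Θ) := by
    apply HasFDerivAt.prodMk
    · exact hasFDerivAt_fst
    · apply hasFDerivAt_pi''
      intro i
      rw [ContinuousLinearMap.proj_pi, hLi]
      have ha : HasFDerivAt (fun z : ℝ × (Fin N → ℝ) => z.2 i)
          ((ContinuousLinearMap.proj i).comp sndL) (lam, Θ) :=
        ((ContinuousLinearMap.proj i).comp sndL).hasFDerivAt
      have hsum : HasFDerivAt (fun z : ℝ × (Fin N → ℝ) =>
          ∑ k ∈ Finset.univ.erase i, ψx (x i - x k) (z.2 i - z.2 k)) (DF i) (lam, Θ) := by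
        rw [hDF]
        apply HasFDerivAt.fun_sum
        intro k hk
        have hlik : HasFDerivAt (fun z : ℝ × (Fin N → ℝ) => z.2 i - z.2 k) (ℓ i k) (lam, Θ) :=
          (ℓ i k).hasFDerivAt
        exact (hψxθ (x i - x k) (Θ i - Θ k)).comp_hasFDerivAt (lam, Θ) hlik
      have hmul : HasFDerivAt (fun z : ℝ × (Fin N → ℝ) =>
          z.1 * ∑ k ∈ Finset.univ.erase i, ψx (x i - x k) (z.2 i - z.2 k))
          (lam • DF i + FΘ i • fstL) (lam, Θ) := hasFDerivAt_fst.mul hsum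
      exact (ha.add hmul).sub_const (p i)
  have hstrict : HasStrictFDerivAt H L₀ (lam, Θ) :=
    hHC1.contDiffAt.hasStrictFDerivAt' hL₀ one_ne_zero
  -- application formula for L₀
  have happ : ∀ δ : ℝ × (Fin N → ℝ), ∀ i,
      (L₀ δ).2 i = (A lam q).mulVec δ.2 i + δ.1 * FΘ i := by
    intro δ i
    have h1 : (L₀ δ).2 i = δ.2 i + (lam * (∑ k ∈ Finset.univ.erase i,
        ψxθ (x i - x k) (Θ i - Θ k) * (δ.2 i - δ.2 k)) + FΘ i * δ.1) := by
      simp [hL₀def, hLi, hDF, hℓ, hfstL, hsndL, ContinuousLinearMap.sum_apply,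
        Finset.mul_sum, mul_comm]
    rw [h1, hmv δ.2 i]; ring
  -- L₀ is bijective
  have hAinj : Function.Injective (A lam q).mulVec :=
    Matrix.mulVec_injective_iff_isUnit.mpr ((Matrix.isUnit_iff_isUnit_det _).mpr hUnit)
  have hinj : Function.Injective L₀ := by
    rw [injective_iff_map_eq_zero L₀]
    intro δ hδ
    have h1 : δ.1 = 0 := congrArg Prod.fst hδ
    have h2 : (A lam q).mulVec δ.2 = 0 := by
      funext i
      have := congrFun (congrArg Prod.snd hδ) i
      rw [happ δ i, h1] at this
      simpa using this
    have h3 : δ.2 = 0 := by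
      apply hAinj
      rw [h2, Matrix.mulVec_zero]
    exact Prod.ext h1 h3
  have hsurj : Function.Surjective (L₀ : (ℝ × (Fin N → ℝ)) →ₗ[ℝ] (ℝ × (Fin N → ℝ))) :=
    LinearMap.injective_iff_surjective.mp hinj
  set eL : (ℝ × (Fin N → ℝ)) ≃L[ℝ] (ℝ × (Fin N → ℝ)) :=
    LinearEquiv.toContinuousLinearEquiv
      (LinearEquiv.ofBijective (L₀ : (ℝ × (Fin N → ℝ)) →ₗ[ℝ] (ℝ × (Fin N → ℝ)))
        ⟨hinj, hsurj⟩) with heLdef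
  have hcoe : (eL : (ℝ × (Fin N → ℝ)) →L[ℝ] (ℝ × (Fin N → ℝ))) = L₀ :=
    ContinuousLinearMap.ext fun v => rfl
  have hstrict' : HasStrictFDerivAt H
      (eL : (ℝ × (Fin N → ℝ)) →L[ℝ] (ℝ × (Fin N → ℝ))) (lam, Θ) := by
    rw [hcoe]; exact hstrict
  -- the base point is mapped to (lam, 0)
  have hz₀ : H (lam, Θ) = (lam, (0 : Fin N → ℝ)) := by
    have hcomp : ∀ i, Θ i + lam * (∑ k ∈ Finset.univ.erase i,
        ψx (x i - x k) (Θ i - Θ k)) - p i = 0 := by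
      intro i
      have h := hθlam lam hlam q i
      simp only [← hxq, ← hpq, ← hΘq] at h
      linarith
    rw [hHdef]
    refine Prod.ext rfl ?_
    funext i
    simp only [Pi.zero_apply]
    exact hcomp i
  -- the local inverse
  set g : ℝ × (Fin N → ℝ) → ℝ × (Fin N → ℝ) :=
    hstrict'.localInverse H eL (lam, Θ) with hgdef
  have hginv : ∀ᶠ y in nhds (lam, (0 : Fin N → ℝ)), H (g y) = y :=
    hz₀ ▸ hstrict'.eventually_right_inverse
  have hgz : g (lam, (0 : Fin N → ℝ)) = (lam, Θ) := by
    rw [← hz₀]; exact hstrict'.localInverse_apply_image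
  have hg' : HasStrictFDerivAt g
      ((eL.symm : (ℝ × (Fin N → ℝ)) →L[ℝ] (ℝ × (Fin N → ℝ)))) (lam, (0 : Fin N → ℝ)) :=
    hz₀ ▸ hstrict'.to_localInverse
  -- the candidate derivative
  set w : Fin N → ℝ := fun i => -∑ j : Fin N, ∑ k ∈ Finset.univ.erase j,
    (A lam q)⁻¹ i j * ψx (x j - x k) (Θ j - Θ k) with hwdef
  have hw : w = -((A lam q)⁻¹.mulVec FΘ) := by
    funext i
    rw [hwdef]
    simp only [Pi.neg_apply, Matrix.mulVec, dotProduct, hFΘ]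
    congr 1
    apply Finset.sum_congr rfl; intro j _
    rw [Finset.mul_sum]
  have hmulw : (A lam q).mulVec w = -FΘ := by
    rw [hw, Matrix.mulVec_neg, Matrix.mulVec_mulVec, Matrix.mul_nonsing_inv _ hUnit,
      Matrix.one_mulVec]
  have heL : eL ((1 : ℝ), w) = ((1 : ℝ), (0 : Fin N → ℝ)) := by
    have hc : eL ((1 : ℝ), w) = L₀ ((1 : ℝ), w) := by rw [← hcoe]; rfl
    rw [hc]
    refine Prod.ext rfl ?_
    funext i
    rw [happ ((1 : ℝ), w) i]
    have := congrFun hmulw i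
    simp only [Pi.neg_apply] at this
    rw [this]
    simp
  have hsymmeq : eL.symm ((1 : ℝ), (0 : Fin N → ℝ)) = ((1 : ℝ), w) := by
    rw [ContinuousLinearEquiv.symm_apply_eq]
    exact heL.symm
  -- derivative of μ ↦ g (μ, 0)
  have hline : HasDerivAt (fun μ : ℝ => ((μ : ℝ), (0 : Fin N → ℝ)))
      ((1 : ℝ), (0 : Fin N → ℝ)) lam :=
    (hasDerivAt_id lam).prodMk (hasDerivAt_const lam (0 : Fin N → ℝ))
  have hgd : HasDerivAt (fun μ : ℝ => g (μ, (0 : Fin N → ℝ)))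
      ((eL.symm : (ℝ × (Fin N → ℝ)) →L[ℝ] (ℝ × (Fin N → ℝ))) ((1 : ℝ), (0 : Fin N → ℝ))) lam :=
    (hg'.hasFDerivAt).comp_hasDerivAt lam hline
  have hgdi : ∀ i, HasDerivAt (fun μ : ℝ => (g (μ, (0 : Fin N → ℝ))).2 i) (w i) lam := by
    intro i
    have h := (((ContinuousLinearMap.proj i).comp sndL).hasFDerivAt).comp_hasDerivAt lam hgd
    have hval : ((ContinuousLinearMap.proj (R := ℝ) (φ := fun _ : Fin N => ℝ) i).comp sndL)
        ((eL.symm : (ℝ × (Fin N → ℝ)) →L[ℝ] (ℝ × (Fin N → ℝ))) ((1 : ℝ), (0 : Fin N → ℝ)))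
        = w i := by
      have : ((eL.symm : (ℝ × (Fin N → ℝ)) →L[ℝ] (ℝ × (Fin N → ℝ))) ((1 : ℝ), (0 : Fin N → ℝ)))
          = ((1 : ℝ), w) := by
        rw [ContinuousLinearEquiv.coe_coe]; exact hsymmeq
      rw [this]; rfl
    rw [hval] at h
    exact h
  -- eventual equality with θlam
  have hev1 : ∀ᶠ μ in nhds lam, H (g (μ, (0 : Fin N → ℝ))) = (μ, (0 : Fin N → ℝ)) := by
    have ht : Filter.Tendsto (fun μ : ℝ => ((μ : ℝ), (0 : Fin N → ℝ)))
        (nhds lam) (nhds (lam, (0 : Fin N → ℝ))) :=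
      (continuous_id.prodMk continuous_const).tendsto lam
    exact ht.eventually hginv
  have heqev : ∀ᶠ μ in nhdsWithin lam (Set.Ici 0),
      θlam μ q = (g (μ, (0 : Fin N → ℝ))).2 := by
    filter_upwards [eventually_nhdsWithin_of_eventually_nhds hev1, self_mem_nhdsWithin]
      with μ hμ1 hμ2
    have hμ0 : (0 : ℝ) ≤ μ := hμ2
    have h1 : (g (μ, (0 : Fin N → ℝ))).1 = μ := congrArg Prod.fst hμ1
    have h2 : ∀ i, p i = (g (μ, (0 : Fin N → ℝ))).2 i + μ * ∑ k ∈ Finset.univ.erase i,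
        ψx (x i - x k) ((g (μ, (0 : Fin N → ℝ))).2 i - (g (μ, (0 : Fin N → ℝ))).2 k) := by
      intro i
      have h3 := congrFun (congrArg Prod.snd hμ1) i
      rw [hHdef] at h3
      simp only [Pi.zero_apply] at h3
      rw [h1] at h3
      linarith [h3]
    have h4 : ∀ i, p i = θlam μ q i + μ * ∑ k ∈ Finset.univ.erase i,
        ψx (x i - x k) (θlam μ q i - θlam μ q k) := by
      intro i
      have h := hθlam μ hμ0 q i
      simp only [← hxq, ← hpq] at h
      exact h
    exact uniqSol ψx hmono hanti x p μ hμ0 _ _ h4 h2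
  have heqlam : θlam lam q = (g (lam, (0 : Fin N → ℝ))).2 := by
    rw [hgz]
  -- conclusion
  intro i
  have hfinal : HasDerivWithinAt (fun μ : ℝ => θlam μ q i) (w i) (Set.Ici 0) lam := by
    apply HasDerivWithinAt.congr_of_eventuallyEq
      (((hgdi i).hasDerivWithinAt))
      ?_ ?_
    · filter_upwards [heqev] with μ hμ
      exact congrFun hμ i
    · exact congrFun heqlam i
  have : (-∑ j : Fin N, ∑ k ∈ Finset.univ.erase j,
      (A lam q)⁻¹ i j * ψx (x j - x k) (Θ j - Θ k)) = w i := by rw [hwdef]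
  rw [this]
  exact hfinal
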